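/- Let n ≥ 3 and q > 0. Consider f(x₁,…,xₙ) = (P₃ + (1-q)P₁P₂ - qP₁³)/(P₂ + P₁²)^{3/2} on ℝⁿ \ {0}, where P_k = Σᵢ xᵢ^k. Any critical point of the restriction of f to the unit sphere {P₂ = 1} takes at most two distinct values among the coordinates x₁,…,xₙ. -/

import Mathlib

open Real

/-- Critical points of `f = (P₃ + (1-q)P₁P₂ - qP₁³)/(P₂+P₁²)^{3/2}` restricted to the
unit sphere `{P₂ = 1}` (in the sense of the Lagrange multiplier condition) take at most
two distinct values among their coordinates. -/
theorem stmt_16 (n : ℕ) (hn : 3 ≤ n) (q : ℝ) (hq : 0 < q)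
    (x : Fin n → ℝ) (hx : ∑ i, (x i) ^ 2 = 1) (lam : ℝ)
    (hcrit : ∀ i, fderiv ℝ (fun y : Fin n → ℝ =>
        ((∑ j, (y j) ^ 3) + (1 - q) * (∑ j, y j) * (∑ j, (y j) ^ 2) - q * (∑ j, y j) ^ 3) /
          ((∑ j, (y j) ^ 2) + (∑ j, y j) ^ 2) ^ ((3 : ℝ) / 2)) x (Pi.single i 1) +
        2 * lam * x i = 0) :
    ∃ a b : ℝ, ∀ i, x i = a ∨ x i = b := by
  classical
  have hproj : ∀ j : Fin n, HasFDerivAt (fun y : Fin n → ℝ => y j)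
      (ContinuousLinearMap.proj j : (Fin n → ℝ) →L[ℝ] ℝ) x := fun j => hasFDerivAt_apply j x
  have hsq : ∀ j : Fin n, HasFDerivAt (fun y : Fin n → ℝ => (y j) ^ 2)
      ((2 * x j) • (ContinuousLinearMap.proj j : (Fin n → ℝ) →L[ℝ] ℝ)) x := by
    intro j
    have h2 := (hproj j).fun_mul (hproj j)
    have he : (fun y : Fin n → ℝ => (y j) ^ 2) = fun y => y j * y j := by funext y; ring
    rw [he]
    refine h2.congr_fderiv ?_
    ext v
    simp [ContinuousLinearMap.proj_apply]
    ring
  have hcb : ∀ j : Fin n, HasFDerivAt (fun y : Fin n → ℝ => (y j) ^ 3)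
      ((3 * (x j) ^ 2) • (ContinuousLinearMap.proj j : (Fin n → ℝ) →L[ℝ] ℝ)) x := by
    intro j
    have h3 := ((hproj j).fun_mul (hproj j)).fun_mul (hproj j)
    have he : (fun y : Fin n → ℝ => (y j) ^ 3) = fun y => y j * y j * y j := by funext y; ring
    rw [he]
    refine h3.congr_fderiv ?_
    ext v
    simp [ContinuousLinearMap.proj_apply]
    ring
  set L1 : (Fin n → ℝ) →L[ℝ] ℝ := ∑ j, ContinuousLinearMap.proj j with hL1
  set L2 : (Fin n → ℝ) →L[ℝ] ℝ := ∑ j, (2 * x j) • ContinuousLinearMap.proj j with hL2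
  set L3 : (Fin n → ℝ) →L[ℝ] ℝ := ∑ j, (3 * (x j) ^ 2) • ContinuousLinearMap.proj j with hL3
  have hS1 : HasFDerivAt (fun y : Fin n → ℝ => ∑ j, y j) L1 x :=
    HasFDerivAt.fun_sum fun j _ => hproj j
  have hS2 : HasFDerivAt (fun y : Fin n → ℝ => ∑ j, (y j) ^ 2) L2 x :=
    HasFDerivAt.fun_sum fun j _ => hsq j
  have hS3 : HasFDerivAt (fun y : Fin n → ℝ => ∑ j, (y j) ^ 3) L3 x :=
    HasFDerivAt.fun_sum fun j _ => hcb j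
  set P1 : ℝ := ∑ j, x j with hP1
  set P3 : ℝ := ∑ j, (x j) ^ 3 with hP3d
  -- square and cube of S1
  have hS1sq : HasFDerivAt (fun y : Fin n → ℝ => (∑ j, y j) ^ 2) ((2 * P1) • L1) x := by
    have h2 := hS1.fun_mul hS1
    have he : (fun y : Fin n → ℝ => (∑ j, y j) ^ 2) = fun y => (∑ j, y j) * (∑ j, y j) := by
      funext y; ring
    rw [he]
    refine h2.congr_fderiv ?_
    ext v; simp; ring
  have hS1cb : HasFDerivAt (fun y : Fin n → ℝ => (∑ j, y j) ^ 3) ((3 * P1 ^ 2) • L1) x := by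
    have h3 := (hS1.fun_mul hS1).fun_mul hS1
    have he : (fun y : Fin n → ℝ => (∑ j, y j) ^ 3)
        = fun y => (∑ j, y j) * (∑ j, y j) * (∑ j, y j) := by funext y; ring
    rw [he]
    refine h3.congr_fderiv ?_
    ext v; simp; ring
  -- numerator
  have hN := (hS3.fun_add ((hS1.const_mul (1 - q)).fun_mul hS2)).fun_sub (hS1cb.const_mul q)
  -- denominator base
  have hD := hS2.fun_add hS1sq
  have hDpos : (0:ℝ) < (∑ j, (x j) ^ 2) + (∑ j, x j) ^ 2 := by
    rw [hx]; positivity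
  have hDp := hD.rpow_const (p := -((3:ℝ)/2)) (Or.inl hDpos.ne')
  have hf := hN.fun_mul hDp
  -- rewrite the original function as N * D^(-3/2)
  have hfeq : (fun y : Fin n → ℝ =>
        ((∑ j, (y j) ^ 3) + (1 - q) * (∑ j, y j) * (∑ j, (y j) ^ 2) - q * (∑ j, y j) ^ 3) /
          ((∑ j, (y j) ^ 2) + (∑ j, y j) ^ 2) ^ ((3 : ℝ) / 2))
      = fun y : Fin n → ℝ =>
        ((∑ j, (y j) ^ 3) + (1 - q) * (∑ j, y j) * (∑ j, (y j) ^ 2) - q * (∑ j, y j) ^ 3) *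
          ((∑ j, (y j) ^ 2) + (∑ j, y j) ^ 2) ^ (-((3 : ℝ) / 2)) := by
    funext y
    rw [div_eq_mul_inv, ← Real.rpow_neg (by positivity)]
  simp only [hfeq] at hcrit
  have hfd := hf.fderiv
  -- key evaluation
  set N : ℝ := P3 + (1 - q) * P1 * 1 - q * P1 ^ 3 with hNd
  set E : ℝ := 1 + P1 ^ 2 with hEd
  have hE0 : (0:ℝ) < E := by positivity
  set c3 : ℝ := E ^ (-((3:ℝ)/2)) with hc3
  set c5 : ℝ := E ^ (-((3:ℝ)/2) - 1) with hc5
  have hc3pos : 0 < c3 := Real.rpow_pos_of_pos hE0 _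
  have hL1e : ∀ i : Fin n, L1 (Pi.single i 1) = 1 := by
    intro i
    simp [hL1, ContinuousLinearMap.sum_apply, ContinuousLinearMap.proj_apply,
      Finset.sum_pi_single']
  have hL2e : ∀ i : Fin n, L2 (Pi.single i 1) = 2 * x i := by
    intro i
    simp [hL2, ContinuousLinearMap.sum_apply, ContinuousLinearMap.smul_apply,
      ContinuousLinearMap.proj_apply, smul_eq_mul, Pi.single_apply, mul_ite,
      Finset.sum_ite_eq']
  have hL3e : ∀ i : Fin n, L3 (Pi.single i 1) = 3 * (x i) ^ 2 := by
    intro i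
    simp [hL3, ContinuousLinearMap.sum_apply, ContinuousLinearMap.smul_apply,
      ContinuousLinearMap.proj_apply, smul_eq_mul, Pi.single_apply, mul_ite,
      Finset.sum_ite_eq']
  have key : ∀ i, (3 * c3) * (x i * x i) +
      (2 * (1 - q) * P1 * c3 - 3 * N * c5 + 2 * lam) * x i +
      ((1 - q) * c3 - 3 * q * P1 ^ 2 * c3 - 3 * N * c5 * P1) = 0 := by
    intro i
    have h := hcrit i
    rw [hfd] at h
    simp only [ContinuousLinearMap.add_apply, ContinuousLinearMap.sub_apply,
      ContinuousLinearMap.smul_apply, smul_eq_mul, hx] at h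
    rw [hL1e i, hL2e i, hL3e i, ← hP1, ← hP3d, ← hEd, ← hc3, ← hc5] at h
    linear_combination h
  have ha : (3 * c3) ≠ 0 := by positivity
  have i0 : Fin n := ⟨0, by omega⟩
  set s : ℝ := 2 * (3 * c3) * x i0 +
      (2 * (1 - q) * P1 * c3 - 3 * N * c5 + 2 * lam) with hs
  have hdisc := (quadratic_eq_zero_iff_discrim_eq_sq ha (x i0)).mp (key i0)
  refine ⟨(-(2 * (1 - q) * P1 * c3 - 3 * N * c5 + 2 * lam) + s) / (2 * (3 * c3)),
          (-(2 * (1 - q) * P1 * c3 - 3 * N * c5 + 2 * lam) - s) / (2 * (3 * c3)), ?_⟩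
  intro i
  exact (quadratic_eq_zero_iff ha (by rw [hdisc]; ring) (x i)).mp (key i)
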